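/- Let μ be a Borel probability measure on [0,∞) with μ ≠ δ₀. For x > 0 put ψ_μ(−x) = ∫_{[0,∞)} (−xs)/(1+xs) dμ(s); then ψ_μ(−x) ∈ (−1,0) for x > 0, and lim_{x→+∞} (1/x)·log( x·(1+ψ_μ(−x)) / (−ψ_μ(−x)) ) = 0. (Equivalently, writing κ_μ(z) = z/η_μ(z) with η_μ = ψ_μ/(1+ψ_μ), one has log κ_μ(−x)/x → 0 as x → +∞.) -/

import Mathlib

open MeasureTheory Filter

/-- ψ_μ(−x) for x > 0, as a real integral: ∫ (−xs)/(1+xs) dμ(s). -/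
noncomputable def psiNeg (μ : Measure ℝ) (x : ℝ) : ℝ :=
  ∫ s : ℝ, (-x * s) / (1 + x * s) ∂μ

lemma psi13_dirac (μ : Measure ℝ) [IsProbabilityMeasure μ] (h : ∀ᵐ s ∂μ, s = 0) :
    μ = Measure.dirac 0 := by
  have h0 : μ ({0}ᶜ) = 0 := by
    rw [ae_iff] at h
    convert h using 2
    ext a; simp
  ext A hA
  rw [Measure.dirac_apply' _ hA]
  by_cases hmem : (0:ℝ) ∈ A
  · have h1 : μ {0} = 1 := by
      have := measure_add_measure_compl (μ := μ) (s := {0}) (measurableSet_singleton 0)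
      simp [h0, measure_univ] at this
      simpa using this
    have hle : μ A ≤ 1 := prob_le_one
    have hge : μ {0} ≤ μ A := measure_mono (Set.singleton_subset_iff.mpr hmem)
    simp [Set.indicator_of_mem hmem]
    exact le_antisymm hle (h1 ▸ hge)
  · have hsub : A ⊆ {0}ᶜ := fun y hy => by
      simp only [Set.mem_compl_iff, Set.mem_singleton_iff]
      rintro rfl; exact hmem hy
    simp [Set.indicator_of_notMem hmem]
    exact measure_mono_null hsub h0

section Aux

variable {μ : Measure ℝ} [IsProbabilityMeasure μ]

lemma psi13_aenn (hsupp : μ (Set.Iio 0) = 0) : ∀ᵐ s ∂μ, 0 ≤ s := by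
  rw [ae_iff]
  convert hsupp using 2
  ext a
  simp [not_le]

lemma psi13_int_f (hs : ∀ᵐ s ∂μ, 0 ≤ s) {x : ℝ} (hx : 0 < x) :
    Integrable (fun s : ℝ => (-x * s) / (1 + x * s)) μ := by
  refine (integrable_const (1:ℝ)).mono'
    (((measurable_const.mul measurable_id).div
      (measurable_const.add (measurable_const.mul measurable_id))).aestronglyMeasurable) ?_
  filter_upwards [hs] with s hs0
  have h1 : (0:ℝ) < 1 + x * s := by positivity
  have habs : |(-x * s)| = x * s := by
    rw [neg_mul, abs_neg, abs_of_nonneg (by positivity)]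
  rw [Real.norm_eq_abs, abs_div, abs_of_pos h1, habs, div_le_one h1]
  nlinarith

lemma psi13_int_pos (hs : ∀ᵐ s ∂μ, 0 ≤ s) {x : ℝ} (hx : 0 < x) :
    Integrable (fun s : ℝ => (x * s) / (1 + x * s)) μ := by
  have := (psi13_int_f hs hx).neg
  refine this.congr (Eventually.of_forall fun s => ?_)
  simp [neg_div, neg_mul]

lemma psi13_int_g (hs : ∀ᵐ s ∂μ, 0 ≤ s) {x : ℝ} (hx : 0 < x) :
    Integrable (fun s : ℝ => 1 / (1 + x * s)) μ := by
  refine (integrable_const (1:ℝ)).mono'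
    ((measurable_const.div
      (measurable_const.add (measurable_const.mul measurable_id))).aestronglyMeasurable) ?_
  filter_upwards [hs] with s hs0
  have h1 : (0:ℝ) < 1 + x * s := by positivity
  rw [Real.norm_eq_abs, abs_div, abs_one, abs_of_pos h1, div_le_one h1]
  nlinarith

lemma psi13_neg_eq (hs : ∀ᵐ s ∂μ, 0 ≤ s) (x : ℝ) :
    -psiNeg μ x = ∫ s : ℝ, (x * s) / (1 + x * s) ∂μ := by
  rw [psiNeg, ← integral_neg]
  congr 1
  funext s
  simp [neg_div, neg_mul]

lemma psi13_one_add_eq (hs : ∀ᵐ s ∂μ, 0 ≤ s) {x : ℝ} (hx : 0 < x) :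
    1 + psiNeg μ x = ∫ s : ℝ, 1 / (1 + x * s) ∂μ := by
  have hae : ∀ᵐ s ∂μ, (1:ℝ) / (1 + x * s) = (-x * s) / (1 + x * s) + 1 := by
    filter_upwards [hs] with s hs0
    have h1 : (0:ℝ) < 1 + x * s := by positivity
    field_simp
    ring
  rw [integral_congr_ae hae, integral_add (psi13_int_f hs hx) (integrable_const 1)]
  simp [psiNeg]
  ring

lemma psi13_part1 (hsupp : μ (Set.Iio 0) = 0) (hμ : μ ≠ Measure.dirac 0)
    {x : ℝ} (hx : 0 < x) : psiNeg μ x ∈ Set.Ioo (-1 : ℝ) 0 := by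
  have hs := psi13_aenn hsupp
  haveI : (ae μ).NeBot := ae_neBot.mpr (IsProbabilityMeasure.ne_zero μ)
  constructor
  · -- -1 < psiNeg μ x, i.e. 0 < 1 + psiNeg μ x = ∫ 1/(1+xs)
    have heq := psi13_one_add_eq hs hx
    have hnn : 0 ≤ᵐ[μ] fun s : ℝ => 1 / (1 + x * s) := by
      filter_upwards [hs] with s hs0
      have h1 : (0:ℝ) < 1 + x * s := by positivity
      positivity
    have hint := psi13_int_g hs hx
    have hne : ∫ s : ℝ, 1 / (1 + x * s) ∂μ ≠ 0 := by
      intro h0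
      have := (integral_eq_zero_iff_of_nonneg_ae hnn hint).mp h0
      have hcontra : ∀ᵐ s ∂μ, False := by
        filter_upwards [hs, this] with s hs0 hz
        have h1 : (0:ℝ) < 1 + x * s := by positivity
        simp only [Pi.zero_apply] at hz
        rw [div_eq_zero_iff] at hz
        rcases hz with h | h
        · exact one_ne_zero h
        · linarith
      exact hcontra.exists.choose_spec
    have hpos : 0 < ∫ s : ℝ, 1 / (1 + x * s) ∂μ :=
      lt_of_le_of_ne (integral_nonneg_of_ae hnn) (Ne.symm hne)
    linarith [heq ▸ hpos]
  · -- psiNeg μ x < 0, i.e. 0 < -psiNeg μ x = ∫ xs/(1+xs)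
    have heq := psi13_neg_eq hs x
    have hnn : 0 ≤ᵐ[μ] fun s : ℝ => (x * s) / (1 + x * s) := by
      filter_upwards [hs] with s hs0
      have h1 : (0:ℝ) < 1 + x * s := by positivity
      positivity
    have hint := psi13_int_pos hs hx
    have hne : ∫ s : ℝ, (x * s) / (1 + x * s) ∂μ ≠ 0 := by
      intro h0
      have hz := (integral_eq_zero_iff_of_nonneg_ae hnn hint).mp h0
      apply hμ
      apply psi13_dirac
      filter_upwards [hs, hz] with s hs0 hzs
      simp only [Pi.zero_apply] at hzs
      have h1 : (0:ℝ) < 1 + x * s := by positivity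
      rw [div_eq_zero_iff] at hzs
      rcases hzs with h | h
      · have : s = 0 ∨ x = 0 := by
          rcases mul_eq_zero.mp h with h' | h'
          · exact Or.inr h'
          · exact Or.inl h'
        rcases this with h' | h'
        · exact h'
        · exact absurd h' (ne_of_gt hx)
      · linarith
    have hpos : 0 < ∫ s : ℝ, (x * s) / (1 + x * s) ∂μ :=
      lt_of_le_of_ne (integral_nonneg_of_ae hnn) (Ne.symm hne)
    linarith [heq ▸ hpos]

end Aux

theorem stmt13 (μ : Measure ℝ) [IsProbabilityMeasure μ]
    (hsupp : μ (Set.Iio 0) = 0) (hμ : μ ≠ Measure.dirac 0) :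
    (∀ x : ℝ, 0 < x → psiNeg μ x ∈ Set.Ioo (-1 : ℝ) 0) ∧
    Tendsto (fun x : ℝ =>
        (1 / x) * Real.log (x * (1 + psiNeg μ x) / (-psiNeg μ x)))
      atTop (nhds 0) := by
  have hs := psi13_aenn hsupp
  have hpart1 : ∀ x : ℝ, 0 < x → psiNeg μ x ∈ Set.Ioo (-1 : ℝ) 0 :=
    fun x hx => psi13_part1 hsupp hμ hx
  refine ⟨hpart1, ?_⟩
  -- constants from x = 1
  obtain ⟨h1a, h1b⟩ := hpart1 1 one_pos
  set c : ℝ := -psiNeg μ 1 with hc_def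
  set d : ℝ := 1 + psiNeg μ 1 with hd_def
  have hc : 0 < c := by simp only [hc_def]; linarith
  have hd : 0 < d := by simp only [hd_def]; linarith
  -- key estimates for x ≥ 1
  have hkey : ∀ x : ℝ, 1 ≤ x →
      d ≤ x * (1 + psiNeg μ x) / (-psiNeg μ x) ∧
      x * (1 + psiNeg μ x) / (-psiNeg μ x) ≤ x / c := by
    intro x hx1
    have hx : (0:ℝ) < x := lt_of_lt_of_le one_pos hx1
    obtain ⟨hxa, hxb⟩ := hpart1 x hx
    set D : ℝ := -psiNeg μ x with hD_def
    have hD0 : 0 < D := by simp only [hD_def]; linarith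
    -- D ≤ 1
    have hD1 : D ≤ 1 := by
      rw [hD_def, psi13_neg_eq hs x]
      calc ∫ s : ℝ, (x * s) / (1 + x * s) ∂μ
          ≤ ∫ _ : ℝ, (1:ℝ) ∂μ := by
            refine integral_mono_ae (psi13_int_pos hs hx) (integrable_const 1) ?_
            filter_upwards [hs] with s hs0
            have h1 : (0:ℝ) < 1 + x * s := by positivity
            rw [div_le_one h1]; nlinarith
        _ = 1 := by simp
    -- c ≤ D
    have hDc : c ≤ D := by
      rw [hc_def, hD_def, psi13_neg_eq hs 1, psi13_neg_eq hs x]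
      refine integral_mono_ae (psi13_int_pos hs one_pos) (psi13_int_pos hs hx) ?_
      filter_upwards [hs] with s hs0
      have h1 : (0:ℝ) < 1 + 1 * s := by positivity
      have h2 : (0:ℝ) < 1 + x * s := by positivity
      rw [div_le_div_iff₀ h1 h2]
      nlinarith
    -- N := x * (1 + psiNeg μ x)
    set N : ℝ := x * (1 + psiNeg μ x) with hN_def
    have hN0 : 0 < N := by apply mul_pos hx; linarith
    -- N ≤ x
    have hNx : N ≤ x := by
      rw [hN_def]
      nlinarith
    -- d ≤ N
    have hNd : d ≤ N := by
      rw [hd_def, hN_def, psi13_one_add_eq hs one_pos, psi13_one_add_eq hs hx,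
        ← integral_const_mul]
      refine integral_mono_ae (psi13_int_g hs one_pos)
        (((psi13_int_g hs hx).const_mul x)) ?_
      filter_upwards [hs] with s hs0
      have h1 : (0:ℝ) < 1 + 1 * s := by positivity
      have h2 : (0:ℝ) < 1 + x * s := by positivity
      rw [mul_one_div, div_le_div_iff₀ h1 h2]
      nlinarith
    constructor
    · rw [le_div_iff₀ hD0]
      nlinarith
    · rw [div_le_div_iff₀ hD0 hc]
      nlinarith
  -- squeeze
  have hlow : Tendsto (fun x : ℝ => (1 / x) * Real.log d) atTop (nhds 0) := by
    have h2 : Tendsto (fun x : ℝ => Real.log d / x) atTop (nhds 0) :=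
      tendsto_const_nhds.div_atTop tendsto_id
    refine h2.congr fun x => by ring
  have hup : Tendsto (fun x : ℝ => (1 / x) * (Real.log x - Real.log c)) atTop (nhds 0) := by
    have h1 : Tendsto (fun x : ℝ => Real.log x / x) atTop (nhds 0) :=
      Real.isLittleO_log_id_atTop.tendsto_div_nhds_zero
    have h2 : Tendsto (fun x : ℝ => Real.log c / x) atTop (nhds 0) :=
      tendsto_const_nhds.div_atTop tendsto_id
    have h3 : Tendsto (fun x : ℝ => Real.log x / x - Real.log c / x) atTop (nhds 0) := by
      simpa using h1.sub h2
    refine h3.congr fun x => by ring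
  refine tendsto_of_tendsto_of_tendsto_of_le_of_le' hlow hup ?_ ?_
  · filter_upwards [eventually_ge_atTop (1:ℝ)] with x hx1
    have hx : (0:ℝ) < x := lt_of_lt_of_le one_pos hx1
    obtain ⟨hge, _⟩ := hkey x hx1
    have hR0 : 0 < x * (1 + psiNeg μ x) / (-psiNeg μ x) := lt_of_lt_of_le hd hge
    have := Real.log_le_log hd hge
    exact mul_le_mul_of_nonneg_left this (by positivity)
  · filter_upwards [eventually_ge_atTop (1:ℝ)] with x hx1
    have hx : (0:ℝ) < x := lt_of_lt_of_le one_pos hx1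
    obtain ⟨hge, hle⟩ := hkey x hx1
    have hR0 : 0 < x * (1 + psiNeg μ x) / (-psiNeg μ x) := lt_of_lt_of_le hd hge
    have hlog : Real.log (x * (1 + psiNeg μ x) / (-psiNeg μ x)) ≤ Real.log x - Real.log c := by
      have := Real.log_le_log hR0 hle
      rwa [Real.log_div (ne_of_gt hx) (ne_of_gt hc)] at this
    exact mul_le_mul_of_nonneg_left hlog (by positivity)
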